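/- Let C, D be categories where D has an initial object that is strict (every morphism into it is an isomorphism), and let F : C → D be a fully faithful functor whose essential image does not contain the initial object of D. Then the extension F^◁ : C^◁ → D of F along the left cone (sending the new cone point to the initial object of D) is again fully faithful. -/

import Mathlib

open CategoryTheory CategoryTheory.Limits

/-- Let `D` be a category with a strict initial object and let `F : C ⥤ D` be a fully
faithful functor whose essential image does not contain the initial object of `D`.  Then the
extension `F^◁ : C^◁ ⥤ D` of `F` along the left cone (sending the adjoined initial object of
`C^◁ = WithInitial C` to the initial object of `D`) is again fully faithful. -/
theorem cone_extension_fully_faithful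
    {C : Type*} [Category C] {D : Type*} [Category D]
    [HasInitial D] [HasStrictInitialObjects D]
    (F : C ⥤ D) [F.Full] [F.Faithful]
    (hF : ∀ X : C, IsEmpty (F.obj X ≅ ⊥_ D)) :
    (WithInitial.lift F (fun X => initial.to (F.obj X))
        (fun _ _ f => initial.to_comp (F.map f))).Full ∧
    (WithInitial.lift F (fun X => initial.to (F.obj X))
        (fun _ _ f => initial.to_comp (F.map f))).Faithful := by
  set G := WithInitial.lift F (fun X => initial.to (F.obj X))
      (fun _ _ f => initial.to_comp (F.map f)) with hG
  constructor
  · constructor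
    intro X Y g
    match X, Y with
    | .of x, .of y =>
        exact ⟨F.preimage g, F.map_preimage g⟩
    | .of x, .star =>
        exact ((hF x).false (@asIso _ _ _ _ (g : F.obj x ⟶ ⊥_ D) (HasStrictInitialObjects.out (g : F.obj x ⟶ ⊥_ D) initialIsInitial))).elim
    | .star, .of y =>
        exact ⟨PUnit.unit, Limits.initial.hom_ext _ _⟩
    | .star, .star =>
        exact ⟨PUnit.unit, Limits.initial.hom_ext _ _⟩
  · constructor
    intro X Y f f' h
    match X, Y with
    | .of x, .of y =>
        exact F.map_injective h
    | .of x, .star => exact (WithInitial.false_of_to_star f).elim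
    | .star, .of y => exact Subsingleton.elim _ _
    | .star, .star => exact Subsingleton.elim _ _
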